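/- Let X ⊆ ℝ^m be nonempty, closed, and convex, and let c : ℝ^m → ℝ^m be continuous on X. If x* is a local minimum of (X, ⪯_c), then x* is a critical element of (X, c). -/

import Mathlib

open Set

noncomputable section

/-- The path point `y_ε = ε x + (1 - ε) y`. -/
def pathPt {m : ℕ} (x y : EuclideanSpace ℝ (Fin m)) (ε : ℝ) :
    EuclideanSpace ℝ (Fin m) :=
  ε • x + (1 - ε) • y

/-- The linear vector polyorder `x ⪯_c y`: for all `ε ∈ [0,1]`,
`⟨x, c(y_ε)⟩ ≤ ⟨y, c(y_ε)⟩`. -/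
def vecLe {m : ℕ} (c : EuclideanSpace ℝ (Fin m) → EuclideanSpace ℝ (Fin m))
    (x y : EuclideanSpace ℝ (Fin m)) : Prop :=
  ∀ ε ∈ Icc (0:ℝ) 1,
    (inner ℝ x (c (pathPt x y ε)) : ℝ) ≤ inner ℝ y (c (pathPt x y ε))

/-- The strict part `x ≺_c y` of the linear vector polyorder. -/
def vecLt {m : ℕ} (c : EuclideanSpace ℝ (Fin m) → EuclideanSpace ℝ (Fin m))
    (x y : EuclideanSpace ℝ (Fin m)) : Prop :=
  vecLe c x y ∧ ¬ vecLe c y x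

/-- `x*` is a local minimum of `(X, ⪯_c)`: it weakly dominates every point of
some neighborhood of `x*` relative to `X`. -/
def IsLocalMinPolyorder {m : ℕ} (X : Set (EuclideanSpace ℝ (Fin m)))
    (c : EuclideanSpace ℝ (Fin m) → EuclideanSpace ℝ (Fin m))
    (xs : EuclideanSpace ℝ (Fin m)) : Prop :=
  ∃ O : Set (EuclideanSpace ℝ (Fin m)), O ⊆ X ∧ O ∈ nhdsWithin xs X ∧
    ∀ x ∈ O, vecLe c xs x

/-- A local minimum of `(X, ⪯_c)` is a critical element of `(X, c)`. -/
theorem isLocalMinPolyorder_isCritical {m : ℕ} (X : Set (EuclideanSpace ℝ (Fin m)))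
    (hXne : X.Nonempty) (hXcl : IsClosed X) (hXconv : Convex ℝ X)
    (c : EuclideanSpace ℝ (Fin m) → EuclideanSpace ℝ (Fin m)) (hc : ContinuousOn c X)
    (xs : EuclideanSpace ℝ (Fin m)) (hxs : xs ∈ X)
    (hlm : IsLocalMinPolyorder X c xs) :
    ∀ x ∈ X, (inner ℝ x (c xs) : ℝ) ≥ inner ℝ xs (c xs) := by
  obtain ⟨O, hOX, hOnhds, hOmin⟩ := hlm
  intro x hx
  -- the segment map t ↦ t•x + (1-t)•xs tends to xs within X as t → 0⁺
  have hz : ∀ t ∈ Icc (0:ℝ) 1, t • x + (1 - t) • xs ∈ X := fun t ht =>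
    hXconv hx hxs ht.1 (by linarith [ht.2]) (by ring)
  -- continuity: find t ∈ (0,1] with z t ∈ O
  obtain ⟨U, hUopen, hxsU, hUX⟩ := mem_nhdsWithin.mp hOnhds
  have hcont : Continuous (fun t : ℝ => t • x + (1 - t) • xs) := by
    continuity
  have hU0 : (fun t : ℝ => t • x + (1 - t) • xs) ⁻¹' U ∈ nhds (0 : ℝ) := by
    apply (hUopen.preimage hcont).mem_nhds
    simp [hxsU]
  obtain ⟨δ, hδpos, hδ⟩ := Metric.mem_nhds_iff.mp hU0
  set t : ℝ := min (δ / 2) 1 with ht_def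
  have htpos : 0 < t := lt_min (by linarith) one_pos
  have ht1 : t ≤ 1 := min_le_right _ _
  have htU : (t • x + (1 - t) • xs) ∈ U := by
    apply hδ
    simp only [Metric.mem_ball, Real.dist_eq]
    rw [sub_zero, abs_of_pos htpos]
    calc t ≤ δ / 2 := min_le_left _ _
      _ < δ := by linarith
  have htO : (t • x + (1 - t) • xs) ∈ O :=
    hUX ⟨htU, hz t ⟨le_of_lt htpos, ht1⟩⟩
  have hle := hOmin _ htO 1 ⟨zero_le_one, le_refl 1⟩
  have hpath : pathPt xs (t • x + (1 - t) • xs) 1 = xs := by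
    simp [pathPt]
  rw [hpath] at hle
  have hinner : (inner ℝ (t • x + (1 - t) • xs) (c xs) : ℝ)
      = t * inner ℝ x (c xs) + (1 - t) * inner ℝ xs (c xs) := by
    rw [inner_add_left, real_inner_smul_left, real_inner_smul_left]
  rw [hinner] at hle
  have : t * (inner ℝ xs (c xs) : ℝ) ≤ t * inner ℝ x (c xs) := by nlinarith
  have := le_of_mul_le_mul_left this htpos
  linarith
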